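/- Let K ≥ 3 and d ≥ 1, let ρ : ℝ → [0,∞) satisfy {ρ(u) : u ∈ ℝ} = [0,∞), and let τ : ℝ → ℝ be V-shaped, i.e., τ is non-increasing on u < 0, non-decreasing on u > 0, and {τ(u) : u ≤ 0} = {τ(u) : u ≥ 0} = [τ(0), ∞). Define the VSL link P_vsl(y; u) = P_sl(y; τ(ρ[u])), where ρ[u] is the ordering transform and τ acts coordinatewise. Then the representation ability of the VSL model with the unrestricted learner class equals the set of all unimodal conditional-probability maps with strictly positive coordinates: {(x ↦ (P_vsl(y; g(x)))_{y∈[K]}) : g : ℝ^d → ℝ^K} = {p : ℝ^d → Δ̂_{K-1}^∅}. -/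

import Mathlib

open scoped BigOperators

noncomputable section

/-- The probability simplex Δ_{K-1} ⊆ ℝ^K. -/
def simplex (K : ℕ) : Set (Fin K → ℝ) :=
  {p | (∑ k, p k) = 1 ∧ ∀ k, 0 ≤ p k ∧ p k ≤ 1}

/-- A PMF (vector) is unimodal: there is a mode M such that p is
nondecreasing up to M and nonincreasing after M. -/
def Unimodal {K : ℕ} (p : Fin K → ℝ) : Prop :=
  ∃ M : Fin K, (∀ k, p k ≤ p M) ∧
    (∀ i j : Fin K, i ≤ j → j ≤ M → p i ≤ p j) ∧
    (∀ i j : Fin K, M ≤ i → i ≤ j → p j ≤ p i)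

/-- Δ̂_{K-1}: the set of unimodal PMFs. -/
def uniSimplex (K : ℕ) : Set (Fin K → ℝ) :=
  {p | p ∈ simplex K ∧ Unimodal p}

/-- The stereotype logit (SL) link function. -/
def Psl {K : ℕ} (u : Fin K → ℝ) (y : Fin K) : ℝ :=
  Real.exp (-(u y)) / ∑ k, Real.exp (-(u k))

/-- The ordering transform ρ[u]: (ρ[u])_1 = u_1, (ρ[u])_k = (ρ[u])_{k-1} + ρ(u_k). -/
def ordT (ρ : ℝ → ℝ) {K : ℕ} (u : Fin K → ℝ) : Fin K → ℝ :=
  fun k => u ⟨0, k.pos⟩ +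
    ∑ j ∈ Finset.univ.filter (fun j : Fin K => 0 < (j : ℕ) ∧ (j : ℕ) ≤ (k : ℕ)), ρ (u j)

/-- The Euclidean norm on ℝ^K. -/
def euclNorm {K : ℕ} (u : Fin K → ℝ) : ℝ :=
  Real.sqrt (∑ k, (u k) ^ 2)

/-- Euclidean distance from a point to a set. -/
def DH {K : ℕ} (u : Fin K → ℝ) (S : Set (Fin K → ℝ)) : ℝ :=
  sInf ((fun v => euclNorm (u - v)) '' S)

namespace Stmt2Aux

variable {K : ℕ}


variable {K : ℕ}

lemma ordT_zero (ρ : ℝ → ℝ) (u : Fin K → ℝ) (h : 0 < K) :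
    ordT ρ u ⟨0, h⟩ = u ⟨0, h⟩ := by
  unfold ordT
  have he : (Finset.univ.filter
      (fun j : Fin K => 0 < (j : ℕ) ∧ (j : ℕ) ≤ ((⟨0, h⟩ : Fin K) : ℕ))) = ∅ := by
    ext j; simp; omega
  simp only [he, Finset.sum_empty, add_zero]

lemma ordT_succ (ρ : ℝ → ℝ) (u : Fin K → ℝ) (n : ℕ) (h : n + 1 < K) :
    ordT ρ u ⟨n + 1, h⟩ = ordT ρ u ⟨n, by omega⟩ + ρ (u ⟨n + 1, h⟩) := by
  unfold ordT
  have he : (Finset.univ.filter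
      (fun j : Fin K => 0 < (j : ℕ) ∧ (j : ℕ) ≤ ((⟨n+1, h⟩ : Fin K) : ℕ)))
      = insert (⟨n+1, h⟩ : Fin K)
        (Finset.univ.filter (fun j : Fin K => 0 < (j : ℕ) ∧ (j : ℕ) ≤ ((⟨n, by omega⟩ : Fin K) : ℕ))) := by
    ext j
    simp [Fin.ext_iff]
    omega
  rw [he, Finset.sum_insert (by simp)]
  ring

lemma ordT_mono (ρ : ℝ → ℝ) (hρ : ∀ t, 0 ≤ ρ t) (u : Fin K → ℝ) :
    Monotone (ordT ρ u) := by
  intro i j hij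
  unfold ordT
  refine add_le_add le_rfl (Finset.sum_le_sum_of_subset_of_nonneg ?_ ?_)
  · intro a ha
    simp only [Finset.mem_filter, Finset.mem_univ, true_and] at ha ⊢
    exact ⟨ha.1, le_trans ha.2 hij⟩
  · intro a _ _; exact hρ _

lemma exists_ordT (ρ : ℝ → ℝ) (hρ : Set.range ρ = Set.Ici (0 : ℝ))
    (w : Fin K → ℝ) (hw : Monotone w) : ∃ u : Fin K → ℝ, ∀ k, ordT ρ u k = w k := by
  have hρ' : ∀ t : ℝ, 0 ≤ t → ∃ s, ρ s = t := by
    intro t ht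
    have : t ∈ Set.range ρ := by rw [hρ]; exact ht
    exact this
  classical
  refine ⟨fun k => if hk : (k : ℕ) = 0 then w k
    else (hρ' (w k - w ⟨(k : ℕ) - 1, by omega⟩)
      (by
        have : (⟨(k : ℕ) - 1, by omega⟩ : Fin K) ≤ k := by
          simp only [Fin.le_def]; omega
        linarith [hw this])).choose, ?_⟩
  intro k
  obtain ⟨n, hn⟩ := k
  induction n with
  | zero => rw [ordT_zero]; simp
  | succ m ih =>
    rw [ordT_succ]
    have hm : m < K := by omega
    rw [ih hm]
    have h1 : ((⟨m+1, hn⟩ : Fin K) : ℕ) ≠ 0 := by simp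
    simp only [dif_neg h1]
    have := (hρ' (w ⟨m+1, hn⟩ - w ⟨(((⟨m+1, hn⟩ : Fin K)) : ℕ) - 1, by omega⟩)
      (by
        have : (⟨(((⟨m+1, hn⟩ : Fin K)) : ℕ) - 1, by omega⟩ : Fin K) ≤ ⟨m+1, hn⟩ := by
          simp only [Fin.le_def]; omega
        linarith [hw this])).choose_spec
    rw [this]
    have : (⟨(((⟨m+1, hn⟩ : Fin K)) : ℕ) - 1, by omega⟩ : Fin K) = ⟨m, hm⟩ := by
      simp
    rw [this]
    ring




variable (τ : ℝ → ℝ)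

lemma tau_minA (hτ3 : τ '' Set.Iic 0 = Set.Ici (τ 0)) : ∀ a : ℝ, a ≤ 0 → τ 0 ≤ τ a := by
  intro a ha
  have : τ a ∈ τ '' Set.Iic 0 := ⟨a, ha, rfl⟩
  rw [hτ3] at this; exact this

lemma tau_minB (hτ4 : τ '' Set.Ici 0 = Set.Ici (τ 0)) : ∀ a : ℝ, 0 ≤ a → τ 0 ≤ τ a := by
  intro a ha
  have : τ a ∈ τ '' Set.Ici 0 := ⟨a, ha, rfl⟩
  rw [hτ4] at this; exact this

lemma tauA (hτ1 : AntitoneOn τ (Set.Iio 0)) (hτ3 : τ '' Set.Iic 0 = Set.Ici (τ 0)) :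
    ∀ a b : ℝ, a ≤ b → b ≤ 0 → τ b ≤ τ a := by
  intro a b hab hb0
  rcases eq_or_lt_of_le hb0 with hb | hb
  · rw [hb]; exact tau_minA τ hτ3 a (hab.trans hb0)
  · rcases eq_or_lt_of_le hab with h | h
    · rw [h]
    · exact hτ1 (Set.mem_Iio.mpr (h.trans hb)) (Set.mem_Iio.mpr hb) hab

lemma tauB (hτ2 : MonotoneOn τ (Set.Ioi 0)) (hτ4 : τ '' Set.Ici 0 = Set.Ici (τ 0)) :
    ∀ a b : ℝ, 0 ≤ a → a ≤ b → τ a ≤ τ b := by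
  intro a b ha0 hab
  rcases eq_or_lt_of_le ha0 with ha | ha
  · rw [← ha]; exact tau_minB τ hτ4 b (ha0.trans hab)
  · rcases eq_or_lt_of_le hab with h | h
    · rw [h]
    · exact hτ2 (Set.mem_Ioi.mpr ha) (Set.mem_Ioi.mpr (ha.trans_le hab)) hab



lemma forward_mem (hK : 0 < K) (ρ : ℝ → ℝ) (hρ : Set.range ρ = Set.Ici (0 : ℝ))
    (τ : ℝ → ℝ)
    (hτ1 : AntitoneOn τ (Set.Iio 0)) (hτ2 : MonotoneOn τ (Set.Ioi 0))
    (hτ3 : τ '' Set.Iic 0 = Set.Ici (τ 0))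
    (hτ4 : τ '' Set.Ici 0 = Set.Ici (τ 0)) (u : Fin K → ℝ) :
    (fun y => Psl (fun k => τ (ordT ρ u k)) y) ∈ uniSimplex K ∧
      ∀ y, Psl (fun k => τ (ordT ρ u k)) y ≠ 0 := by
  have hne : Nonempty (Fin K) := ⟨⟨0, hK⟩⟩
  set w : Fin K → ℝ := ordT ρ u with hw
  set v : Fin K → ℝ := fun k => τ (w k) with hv
  have hZ : 0 < ∑ k, Real.exp (-(v k)) :=
    Finset.sum_pos (fun i _ => Real.exp_pos _) Finset.univ_nonempty
  have hPsl : ∀ y, Psl v y = Real.exp (-(v y)) / ∑ k, Real.exp (-(v k)) := fun y => rfl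
  have key : ∀ i j : Fin K, v j ≤ v i → Psl v i ≤ Psl v j := by
    intro i j hij
    rw [hPsl, hPsl, div_le_div_iff_of_pos_right hZ]
    exact Real.exp_le_exp.mpr (by linarith)
  have hwmono : Monotone w := by
    rw [hw]
    refine ordT_mono ρ (fun t => ?_) u
    have : ρ t ∈ Set.range ρ := Set.mem_range_self t
    rw [hρ] at this; exact this
  obtain ⟨M, _, hM⟩ := Finset.exists_min_image Finset.univ v ⟨⟨0, hK⟩, Finset.mem_univ _⟩
  have hM' : ∀ k, v M ≤ v k := fun k => hM k (Finset.mem_univ k)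
  refine ⟨⟨⟨?_, ?_⟩, M, ?_, ?_, ?_⟩, ?_⟩
  · simp only [hPsl]
    rw [← Finset.sum_div, div_self (ne_of_gt hZ)]
  · intro k
    refine ⟨div_nonneg (Real.exp_pos _).le hZ.le, ?_⟩
    show Psl v k ≤ 1
    rw [hPsl, div_le_one hZ]
    exact Finset.single_le_sum (fun i _ => (Real.exp_pos (-(v i))).le) (Finset.mem_univ k)
  · intro k; exact key k M (hM' k)
  · intro i j hij hjM
    refine key i j ?_
    rcases le_or_gt (w j) 0 with h | h
    · exact tauA τ hτ1 hτ3 _ _ (hwmono hij) h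
    · exact le_trans (tauB τ hτ2 hτ4 _ _ h.le (hwmono hjM)) (hM' i)
  · intro i j hMi hij
    refine key j i ?_
    rcases le_or_gt 0 (w i) with h | h
    · exact tauB τ hτ2 hτ4 _ _ h (hwmono hij)
    · exact le_trans (tauA τ hτ1 hτ3 _ _ (hwmono hMi) h.le) (hM' j)
  · intro y
    exact ne_of_gt (div_pos (Real.exp_pos _) hZ)


lemma backward_mem (ρ : ℝ → ℝ) (hρ : Set.range ρ = Set.Ici (0 : ℝ))
    (τ : ℝ → ℝ)
    (hτ1 : AntitoneOn τ (Set.Iio 0)) (hτ2 : MonotoneOn τ (Set.Ioi 0))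
    (hτ3 : τ '' Set.Iic 0 = Set.Ici (τ 0))
    (hτ4 : τ '' Set.Ici 0 = Set.Ici (τ 0))
    (p0 : Fin K → ℝ) (hp : p0 ∈ uniSimplex K) (hpos : ∀ k, p0 k ≠ 0) :
    ∃ u : Fin K → ℝ, ∀ y, Psl (fun k => τ (ordT ρ u k)) y = p0 y := by
  classical
  obtain ⟨⟨hsum, hbnd⟩, M, hmode, hinc, hdec⟩ := hp
  have hppos : ∀ k, 0 < p0 k := fun k => lt_of_le_of_ne (hbnd k).1 (Ne.symm (hpos k))
  set v : Fin K → ℝ := fun k => τ 0 + Real.log (p0 M) - Real.log (p0 k) with hvdef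
  have hlog : ∀ i j : Fin K, p0 i ≤ p0 j → v j ≤ v i := by
    intro i j h
    have := Real.log_le_log (hppos i) h
    simp only [hvdef]; linarith
  have hv0 : ∀ k, τ 0 ≤ v k := by
    intro k
    have := Real.log_le_log (hppos k) (hmode k)
    simp only [hvdef]; linarith
  -- choice functions
  have hexm : ∀ t : ℝ, τ 0 ≤ t → ∃ s, s ≤ 0 ∧ τ s = t := by
    intro t ht
    have : t ∈ τ '' Set.Iic 0 := by rw [hτ3]; exact ht
    obtain ⟨s, hs, hst⟩ := this
    exact ⟨s, hs, hst⟩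
  have hexp2 : ∀ t : ℝ, τ 0 ≤ t → ∃ s, 0 ≤ s ∧ τ s = t := by
    intro t ht
    have : t ∈ τ '' Set.Ici 0 := by rw [hτ4]; exact ht
    obtain ⟨s, hs, hst⟩ := this
    exact ⟨s, hs, hst⟩
  set cm : ℝ → ℝ := fun t =>
    if t = τ 0 then 0 else if h : ∃ s, s ≤ 0 ∧ τ s = t then h.choose else 0 with hcm
  set cp : ℝ → ℝ := fun t =>
    if t = τ 0 then 0 else if h : ∃ s, 0 ≤ s ∧ τ s = t then h.choose else 0 with hcp
  have cm_le : ∀ t, τ 0 ≤ t → cm t ≤ 0 := by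
    intro t ht
    by_cases h0 : t = τ 0
    · simp [hcm, h0]
    · have h := hexm t ht
      simp only [hcm, if_neg h0, dif_pos h]
      exact h.choose_spec.1
  have cm_eq : ∀ t, τ 0 ≤ t → τ (cm t) = t := by
    intro t ht
    by_cases h0 : t = τ 0
    · simp [hcm, h0]
    · have h := hexm t ht
      simp only [hcm, if_neg h0, dif_pos h]
      exact h.choose_spec.2
  have cp_ge : ∀ t, τ 0 ≤ t → 0 ≤ cp t := by
    intro t ht
    by_cases h0 : t = τ 0
    · simp [hcp, h0]
    · have h := hexp2 t ht
      simp only [hcp, if_neg h0, dif_pos h]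
      exact h.choose_spec.1
  have cp_eq : ∀ t, τ 0 ≤ t → τ (cp t) = t := by
    intro t ht
    by_cases h0 : t = τ 0
    · simp [hcp, h0]
    · have h := hexp2 t ht
      simp only [hcp, if_neg h0, dif_pos h]
      exact h.choose_spec.2
  have cm_neg : ∀ t, τ 0 ≤ t → t ≠ τ 0 → cm t < 0 := by
    intro t ht h0
    rcases lt_or_eq_of_le (cm_le t ht) with h | h
    · exact h
    · exact absurd ((cm_eq t ht).symm.trans (by rw [h])) h0
  have cp_pos : ∀ t, τ 0 ≤ t → t ≠ τ 0 → 0 < cp t := by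
    intro t ht h0
    rcases lt_or_eq_of_le (cp_ge t ht) with h | h
    · exact h
    · exact absurd ((cp_eq t ht).symm.trans (by rw [← h])) h0
  have cm_anti : ∀ t t', τ 0 ≤ t → t ≤ t' → cm t' ≤ cm t := by
    intro t t' ht htt'
    rcases eq_or_lt_of_le htt' with h | h
    · rw [h]
    · have ht' : t' ≠ τ 0 := by intro hc; rw [hc] at h; exact absurd ht (not_le.mpr h)
      have hs' : cm t' < 0 := cm_neg t' (ht.trans htt') ht'
      by_cases h0 : t = τ 0
      · rw [h0]; simp [hcm]; exact (cm_le t' (ht.trans htt')).trans (by simp [hcm, h0])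
      · have hs : cm t < 0 := cm_neg t ht h0
        by_contra hc
        push_neg at hc
        have := hτ1 (Set.mem_Iio.mpr hs) (Set.mem_Iio.mpr hs') hc.le
        rw [cm_eq t ht, cm_eq t' (ht.trans htt')] at this
        exact absurd this (not_le.mpr h)
  have cp_mono : ∀ t t', τ 0 ≤ t → t ≤ t' → cp t ≤ cp t' := by
    intro t t' ht htt'
    rcases eq_or_lt_of_le htt' with h | h
    · rw [h]
    · have ht' : t' ≠ τ 0 := by intro hc; rw [hc] at h; exact absurd ht (not_le.mpr h)
      have hs' : 0 < cp t' := cp_pos t' (ht.trans htt') ht'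
      by_cases h0 : t = τ 0
      · rw [h0]; calc cp (τ 0) = 0 := by simp [hcp]
          _ ≤ cp t' := hs'.le
      · have hs : 0 < cp t := cp_pos t ht h0
        by_contra hc
        push_neg at hc
        have := hτ2 (Set.mem_Ioi.mpr hs') (Set.mem_Ioi.mpr hs) hc.le
        rw [cp_eq t ht, cp_eq t' (ht.trans htt')] at this
        exact absurd this (not_le.mpr h)
  -- the target monotone vector w
  set w : Fin K → ℝ := fun k => if k ≤ M then cm (v k) else cp (v k) with hwdef
  have hwmono : Monotone w := by
    intro i j hij
    by_cases hj : j ≤ M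
    · have hi : i ≤ M := le_trans hij hj
      simp only [hwdef, if_pos hi, if_pos hj]
      exact cm_anti (v j) (v i) (hv0 j) (hlog i j (hinc i j hij hj))
    · by_cases hi : i ≤ M
      · simp only [hwdef, if_pos hi, if_neg hj]
        exact le_trans (cm_le (v i) (hv0 i)) (cp_ge (v j) (hv0 j))
      · simp only [hwdef, if_neg hi, if_neg hj]
        exact cp_mono (v i) (v j) (hv0 i) (hlog j i (hdec i j (not_le.mp hi).le hij))
  have htw : ∀ k, τ (w k) = v k := by
    intro k
    by_cases hk : k ≤ M
    · simp only [hwdef, if_pos hk]; exact cm_eq (v k) (hv0 k)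
    · simp only [hwdef, if_neg hk]; exact cp_eq (v k) (hv0 k)
  obtain ⟨u, hu⟩ := exists_ordT ρ hρ w hwmono
  refine ⟨u, ?_⟩
  have hveq : ∀ k, τ (ordT ρ u k) = v k := fun k => by rw [hu k]; exact htw k
  intro y
  have hexpv : ∀ k, Real.exp (-(v k)) = Real.exp (-(τ 0 + Real.log (p0 M))) * p0 k := by
    intro k
    rw [show -(v k) = (-(τ 0 + Real.log (p0 M))) + Real.log (p0 k) by simp [hvdef]; ring,
      Real.exp_add, Real.exp_log (hppos k)]
  have hc : Real.exp (-(τ 0 + Real.log (p0 M))) ≠ 0 := Real.exp_ne_zero _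
  show Real.exp (-(τ (ordT ρ u y))) / ∑ k, Real.exp (-(τ (ordT ρ u k))) = p0 y
  simp only [hveq, hexpv, ← Finset.mul_sum, hsum, mul_one]
  field_simp


end Stmt2Aux

/-- the representation ability of the VSL model
(P_vsl(y;u) = P_sl(y; τ(ρ[u]))) with the unrestricted learner class equals
the set of all unimodal conditional-probability maps with strictly positive
coordinates. -/

theorem stmt2 (K d : ℕ) (hK : 3 ≤ K) (hd : 1 ≤ d)
    (ρ : ℝ → ℝ) (hρ : Set.range ρ = Set.Ici (0 : ℝ))
    (τ : ℝ → ℝ)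
    (hτ1 : AntitoneOn τ (Set.Iio 0)) (hτ2 : MonotoneOn τ (Set.Ioi 0))
    (hτ3 : τ '' Set.Iic 0 = Set.Ici (τ 0))
    (hτ4 : τ '' Set.Ici 0 = Set.Ici (τ 0)) :
    {P : (Fin d → ℝ) → Fin K → ℝ |
        ∃ g : (Fin d → ℝ) → Fin K → ℝ,
          ∀ x y, P x y = Psl (fun k => τ (ordT ρ (g x) k)) y}
      = {p : (Fin d → ℝ) → Fin K → ℝ |
          ∀ x, p x ∈ uniSimplex K ∧ ∀ k, p x k ≠ 0} := by
  have hK0 : 0 < K := by omega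
  ext P
  simp only [Set.mem_setOf_eq]
  constructor
  · rintro ⟨g, hg⟩ x
    have hPx : P x = fun y => Psl (fun k => τ (ordT ρ (g x) k)) y := funext (hg x)
    have h := Stmt2Aux.forward_mem hK0 ρ hρ τ hτ1 hτ2 hτ3 hτ4 (g x)
    rw [hPx]
    exact ⟨h.1, h.2⟩
  · intro hp
    refine ⟨fun x => (Stmt2Aux.backward_mem ρ hρ τ hτ1 hτ2 hτ3 hτ4 (P x) (hp x).1 (hp x).2).choose, ?_⟩
    intro x y
    exact ((Stmt2Aux.backward_mem ρ hρ τ hτ1 hτ2 hτ3 hτ4 (P x) (hp x).1 (hp x).2).choose_spec y).symm
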